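/- For any connected graph G, the minimum over all tree decompositions of G of the maximum size of unions of bags along root-to-leaf paths equals the tree-depth of G: h_m(G) = td(G). -/

import Mathlib

/-- A rooted tree decomposition of a graph `G` on a finite vertex set `V`. -/
structure RootedTreeDecomp {V : Type} [Fintype V] [DecidableEq V]
    (G : SimpleGraph V) where
  ι : Type
  fintypeι : Fintype ι
  T : SimpleGraph ι
  connected : T.Connected
  acyclic : T.IsAcyclic
  root : ι
  bag : ι → Finset V
  bag_path : ∀ (x y z : ι) (p : T.Walk x y), p.IsPath → z ∈ p.support →
    bag x ∩ bag y ⊆ bag z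
  bag_edge : ∀ u v : V, G.Adj u v → ∃ x : ι, u ∈ bag x ∧ v ∈ bag x
  bag_cover : ∀ v : V, ∃ x : ι, v ∈ bag x

/-- The union of the bags along a walk in the decomposition tree. -/
def pathUnion {V : Type} [Fintype V] [DecidableEq V] {G : SimpleGraph V}
    (D : RootedTreeDecomp G) {x y : D.ι} (p : D.T.Walk x y) : Finset V :=
  p.support.foldr (fun z acc => D.bag z ∪ acc) ∅

/-- `h` bounds the size of the union of bags along every root-to-leaf
(equivalently, root-to-node) path of the decomposition. -/
def PathUnionBound {V : Type} [Fintype V] [DecidableEq V] {G : SimpleGraph V}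
    (D : RootedTreeDecomp G) (h : ℕ) : Prop :=
  ∀ (x : D.ι) (p : D.T.Walk D.root x), p.IsPath → (pathUnion D p).card ≤ h

/-- `h` bounds the tree-depth of `G`: there is a rooted tree on `V` of height
at most `h` whose closure contains `G`. -/
def TreeDepthBound {V : Type} [Fintype V] [DecidableEq V]
    (G : SimpleGraph V) (h : ℕ) : Prop :=
  ∃ (T : SimpleGraph V) (r : V), T.Connected ∧ T.IsAcyclic ∧
    (∀ u v : V, G.Adj u v →
      (∀ p : T.Walk r v, p.IsPath → u ∈ p.support) ∨
      (∀ p : T.Walk r u, p.IsPath → v ∈ p.support)) ∧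
    (∀ (v : V) (p : T.Walk r v), p.IsPath → p.support.length ≤ h)

set_option linter.unusedSectionVars false
set_option maxHeartbeats 1000000

open SimpleGraph

section TreeLemmas
variable {ι : Type} [DecidableEq ι] {T : SimpleGraph ι}
  (hc : T.Connected) (ha : T.IsAcyclic)

/-- canonical path between two vertices of a tree -/
noncomputable def tw (a b : ι) : T.Walk a b :=
  ((Classical.choice (hc.preconnected a b) : T.Walk a b).toPath : T.Path a b).val

lemma tw_isPath (a b : ι) : (tw hc a b).IsPath :=
  ((Classical.choice (hc.preconnected a b) : T.Walk a b).toPath).prop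

include ha in
lemma walk_eq_tw {a b : ι} (p : T.Walk a b) (hp : p.IsPath) : p = tw hc a b := by
  have := SimpleGraph.IsAcyclic.path_unique ha ⟨p, hp⟩ ⟨tw hc a b, tw_isPath hc a b⟩
  exact congrArg Subtype.val this

include ha in
/-- supports of a path in a tree is contained in support of any walk with same endpoints -/
lemma tw_support_subset_walk {a b : ι} (q : T.Walk a b) :
    (tw hc a b).support ⊆ q.support := by
  have h1 : (q.toPath : T.Walk a b) = tw hc a b :=
    walk_eq_tw hc ha _ q.toPath.prop
  rw [← h1]
  exact SimpleGraph.Walk.support_toPath_subset q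

include ha in
lemma tw_takeUntil {a b z : ι} (hz : z ∈ (tw hc a b).support) :
    (tw hc a b).takeUntil z hz = tw hc a z :=
  walk_eq_tw hc ha _ ((tw_isPath hc a b).takeUntil hz)

include ha in
/-- ancestor monotonicity -/
lemma tw_support_mono {a b z : ι} (hz : z ∈ (tw hc a b).support) :
    (tw hc a z).support ⊆ (tw hc a b).support := by
  rw [← tw_takeUntil hc ha hz]
  exact SimpleGraph.Walk.support_takeUntil_subset _ hz

include ha in
lemma tw_length_le {a b z : ι} (hz : z ∈ (tw hc a b).support) :
    (tw hc a z).length ≤ (tw hc a b).length := by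
  rw [← tw_takeUntil hc ha hz]
  exact SimpleGraph.Walk.length_takeUntil_le _ hz

include ha in
lemma tw_length_eq {a b z : ι} (hz : z ∈ (tw hc a b).support)
    (hl : (tw hc a b).length ≤ (tw hc a z).length) : z = b := by
  have hspec := SimpleGraph.Walk.take_spec (tw hc a b) hz
  have hlen := congrArg SimpleGraph.Walk.length hspec
  rw [SimpleGraph.Walk.length_append] at hlen
  rw [tw_takeUntil hc ha hz] at hlen
  have : ((tw hc a b).dropUntil z hz).length = 0 := by omega
  exact SimpleGraph.Walk.eq_of_length_eq_zero this

/-- the take and drop parts of a path share only the split point -/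
lemma path_take_drop_inter {a b z w : ι} {p : T.Walk a b} (hp : p.IsPath)
    (hz : z ∈ p.support) (hw1 : w ∈ (p.takeUntil z hz).support)
    (hw2 : w ∈ (p.dropUntil z hz).support) : w = z := by
  have hspec := SimpleGraph.Walk.take_spec p hz
  have hnd : p.support.Nodup := hp.support_nodup
  rw [← hspec, SimpleGraph.Walk.support_append] at hnd
  rcases (SimpleGraph.Walk.mem_support_iff _).1 hw2 with h | h
  · exact h
  · exact absurd hw1 ((List.disjoint_of_nodup_append hnd) · h)

/-- appending two paths sharing only the junction point gives a path -/
lemma isPath_append {a b c : ι} {p : T.Walk a b} {q : T.Walk b c}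
    (hp : p.IsPath) (hq : q.IsPath)
    (hdisj : ∀ w, w ∈ p.support → w ∈ q.support → w = b) :
    (p.append q).IsPath := by
  rw [SimpleGraph.Walk.isPath_def, SimpleGraph.Walk.support_append]
  have hq' := hq.support_nodup
  rw [SimpleGraph.Walk.support_eq_cons q] at hq'
  obtain ⟨hbt, htail⟩ := List.nodup_cons.1 hq'
  refine List.Nodup.append hp.support_nodup htail ?_
  intro w hw1 hw2
  have hw2' : w ∈ q.support := List.mem_of_mem_tail hw2
  have hwb := hdisj w hw1 hw2'
  subst hwb
  exact hbt hw2

end TreeLemmas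

section TreeLemmas2
variable {ι : Type} [DecidableEq ι] {T : SimpleGraph ι}
  (hc : T.Connected) (ha : T.IsAcyclic)

include ha in
/-- comparability of two vertices on a common root path -/
lemma tw_comparable {a c x y : ι} (hx : x ∈ (tw hc a c).support)
    (hy : y ∈ (tw hc a c).support) :
    x ∈ (tw hc a y).support ∨ y ∈ (tw hc a x).support := by
  set p := tw hc a c with hp
  have hpp : p.IsPath := tw_isPath hc a c
  by_cases hxy : x ∈ (p.takeUntil y hy).support
  · left; rwa [tw_takeUntil hc ha hy] at hxy
  · right
    have hxd : x ∈ (p.dropUntil y hy).support := by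
      have := SimpleGraph.Walk.take_spec p hy
      have hx' := hx
      rw [← this, SimpleGraph.Walk.mem_support_append_iff] at hx'
      tauto
    -- build path a → y → x
    set q1 := p.takeUntil y hy with hq1
    set q2 := (p.dropUntil y hy).takeUntil x hxd with hq2
    have hq1p : q1.IsPath := hpp.takeUntil hy
    have hq2p : q2.IsPath := (hpp.dropUntil hy).takeUntil hxd
    have hdisj : ∀ w, w ∈ q1.support → w ∈ q2.support → w = y := by
      intro w hw1 hw2
      have hw2' : w ∈ (p.dropUntil y hy).support :=
        SimpleGraph.Walk.support_takeUntil_subset _ hxd hw2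
      exact path_take_drop_inter hpp hy hw1 hw2'
    have hpath : (q1.append q2).IsPath := isPath_append hq1p hq2p hdisj
    have heq : q1.append q2 = tw hc a x := walk_eq_tw hc ha _ hpath
    rw [← heq, SimpleGraph.Walk.mem_support_append_iff]
    left
    exact SimpleGraph.Walk.end_mem_support q1

/-- last vertex of a walk belonging to a decidable set, with S-free suffix -/
lemma walk_last_in_set {a b : ι} (S : ι → Prop) [DecidablePred S] (w : T.Walk a b) :
    (∀ z ∈ w.support, ¬ S z) ∨
      ∃ m, S m ∧ ∃ w₂ : T.Walk m b, w₂.support ⊆ w.support ∧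
        (w.IsPath → w₂.IsPath) ∧ (∀ z ∈ w₂.support, z ≠ m → ¬ S z) := by
  induction w with
  | @nil u =>
    by_cases hS : S u
    · exact Or.inr ⟨u, hS, SimpleGraph.Walk.nil, List.Subset.refl _, fun h => h, by simp⟩
    · exact Or.inl (by simpa using hS)
  | @cons u v c hadj w' ih =>
    rcases ih with h | ⟨m, hm, w₂, hsub, hpath, hfree⟩
    · by_cases hS : S u
      · refine Or.inr ⟨u, hS, SimpleGraph.Walk.cons hadj w', List.Subset.refl _, fun h => h, ?_⟩
        intro z hz hzu
        rw [SimpleGraph.Walk.support_cons] at hz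
        rcases List.mem_cons.1 hz with rfl | hz
        · exact absurd rfl hzu
        · exact h z hz
      · refine Or.inl ?_
        intro z hz
        rw [SimpleGraph.Walk.support_cons] at hz
        rcases List.mem_cons.1 hz with rfl | hz
        · exact hS
        · exact h z hz
    · refine Or.inr ⟨m, hm, w₂, ?_, ?_, hfree⟩
      · rw [SimpleGraph.Walk.support_cons]
        exact fun z hz => List.mem_cons_of_mem _ (hsub hz)
      · exact fun hp => hpath hp.of_cons

end TreeLemmas2

section Elim
variable {V : Type} [Fintype V] [DecidableEq V]

/-- the elimination tree graph determined by a parent function -/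
def elimGraph (r : V) (parent : V → V) : SimpleGraph V :=
  SimpleGraph.fromRel (fun a b => parent b = a ∧ b ≠ r)

lemma elimGraph_adj {r : V} {parent : V → V} {a b : V} :
    (elimGraph r parent).Adj a b ↔
      a ≠ b ∧ ((parent b = a ∧ b ≠ r) ∨ (parent a = b ∧ a ≠ r)) :=
  SimpleGraph.fromRel_adj _ a b

variable (key : V → ℕ) (r : V) (parent : V → V)

lemma elim_adj_parent (hk : ∀ v, v ≠ r → key (parent v) < key v)
    {v : V} (hv : v ≠ r) : (elimGraph r parent).Adj (parent v) v := by
  rw [elimGraph_adj]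
  exact ⟨fun he => absurd (he ▸ hk v hv) (lt_irrefl _), Or.inl ⟨rfl, hv⟩⟩

/-- the canonical root-to-v walk in the elimination tree -/
noncomputable def wvAux (hk : ∀ v, v ≠ r → key (parent v) < key v) (v : V) :
    (elimGraph r parent).Walk r v :=
  if h : v = r then (SimpleGraph.Walk.nil.copy rfl h.symm)
  else (wvAux hk (parent v)).concat (elim_adj_parent key r parent hk h)
termination_by key v
decreasing_by exact hk v h

lemma wvAux_root (hk : ∀ v, v ≠ r → key (parent v) < key v) :
    wvAux key r parent hk r = SimpleGraph.Walk.nil := by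
  rw [wvAux]
  simp

lemma wvAux_ne (hk : ∀ v, v ≠ r → key (parent v) < key v) {v : V} (hv : v ≠ r) :
    wvAux key r parent hk v
      = (wvAux key r parent hk (parent v)).concat (elim_adj_parent key r parent hk hv) := by
  rw [wvAux]
  simp [hv]

lemma wvAux_props (hk : ∀ v, v ≠ r → key (parent v) < key v)
    (PUv : V → Finset V)
    (h2 : ∀ v, v ≠ r → parent v ∈ PUv v)
    (h3 : ∀ v, v ∈ PUv v)
    (h4 : ∀ v, v ≠ r → PUv (parent v) ⊆ PUv v) (v : V) :
    (wvAux key r parent hk v).IsPath ∧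
    (∀ w ∈ (wvAux key r parent hk v).support, key w ≤ key v) ∧
    (∀ w ∈ (wvAux key r parent hk v).support, w ∈ PUv v) ∧
    (v ≠ r → parent v ∈ (wvAux key r parent hk v).support) := by
  have main : ∀ n v, key v < n → (wvAux key r parent hk v).IsPath ∧
      (∀ w ∈ (wvAux key r parent hk v).support, key w ≤ key v) ∧
      (∀ w ∈ (wvAux key r parent hk v).support, w ∈ PUv v) ∧
      (v ≠ r → parent v ∈ (wvAux key r parent hk v).support) := by
    intro n
    induction n with
    | zero => intro v hv; omega
    | succ n ih =>
      intro v hv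
      by_cases hr : v = r
      · subst hr
        rw [wvAux_root]
        refine ⟨SimpleGraph.Walk.IsPath.nil, ?_, ?_, fun h => absurd rfl h⟩
        · intro w hw; rw [SimpleGraph.Walk.support_nil, List.mem_singleton] at hw; subst hw; rfl
        · intro w hw; rw [SimpleGraph.Walk.support_nil, List.mem_singleton] at hw; subst hw
          exact h3 _
      · have hklt := hk v hr
        obtain ⟨ihp, ihk, ihpu, _⟩ := ih (parent v) (by omega)
        rw [wvAux_ne key r parent hk hr]
        have hsupp : ((wvAux key r parent hk (parent v)).concat
            (elim_adj_parent key r parent hk hr)).support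
            = (wvAux key r parent hk (parent v)).support ++ [v] := by
          rw [SimpleGraph.Walk.support_concat]
        have hvnot : v ∉ (wvAux key r parent hk (parent v)).support := by
          intro hmem
          have := ihk v hmem
          omega
        refine ⟨?_, ?_, ?_, ?_⟩
        · rw [SimpleGraph.Walk.isPath_def, hsupp]
          refine List.Nodup.append ihp.support_nodup (List.nodup_singleton v) ?_
          intro w hw1 hw2
          rw [List.mem_singleton] at hw2
          subst hw2
          exact absurd hw1 hvnot
        · intro w hw
          rw [hsupp, List.mem_append, List.mem_singleton] at hw
          rcases hw with hw | rfl
          · exact le_of_lt (lt_of_le_of_lt (ihk w hw) hklt)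
          · rfl
        · intro w hw
          rw [hsupp, List.mem_append, List.mem_singleton] at hw
          rcases hw with hw | rfl
          · exact h4 v hr (ihpu w hw)
          · exact h3 _
        · intro _
          rw [hsupp, List.mem_append]
          exact Or.inl (SimpleGraph.Walk.end_mem_support _)
  exact main (key v + 1) v (Nat.lt_succ_self _)

lemma elim_path_unique (hk : ∀ v, v ≠ r → key (parent v) < key v)
    {v : V} (p : (elimGraph r parent).Walk r v) (hp : p.IsPath) :
    p = wvAux key r parent hk v := by
  have main : ∀ n (v : V) (p : (elimGraph r parent).Walk r v), p.IsPath →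
      p.length < n → p = wvAux key r parent hk v := by
    intro n
    induction n with
    | zero => intro v p _ h; omega
    | succ n ih =>
      intro v p hp hlen
      by_cases hvr : v = r
      · subst hvr
        rw [SimpleGraph.Walk.isPath_iff_eq_nil] at hp
        rw [hp, wvAux_root]
      · cases p with
        | nil => exact absurd rfl hvr
        | cons hadj p' =>
          obtain ⟨d, q, hd, heq⟩ := SimpleGraph.Walk.exists_cons_eq_concat hadj p'
          rw [heq] at hp hlen ⊢
          have hq : q.IsPath := by
            rw [SimpleGraph.Walk.concat_eq_append] at hp
            exact hp.of_append_left
          have hlq : q.length < n := by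
            rw [SimpleGraph.Walk.length_concat] at hlen
            omega
          have hvq : v ∉ q.support := by
            intro hmem
            have := hp.support_nodup
            rw [SimpleGraph.Walk.support_concat] at this
            obtain ⟨-, -, hdis⟩ := List.nodup_append.1 this
            exact hdis v hmem v (List.mem_singleton_self v) rfl
          rcases (elimGraph_adj.1 hd).2 with ⟨hpd, -⟩ | ⟨hpd, hdr⟩
          · subst hpd
            rw [ih _ q hq hlq]
            rw [wvAux_ne key r parent hk hvr]
          · -- parent d = v, the walk arrives from a child: impossible
            exfalso
            have hqd : q = wvAux key r parent hk d := ih _ q hq hlq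
            have := (wvAux_props key r parent hk (fun _ => Finset.univ)
              (fun _ _ => Finset.mem_univ _) (fun _ => Finset.mem_univ _)
              (fun _ _ => Finset.subset_univ _) d).2.2.2 hdr
            rw [← hqd, hpd] at this
            exact hvq this
  exact main (p.length + 1) v p hp (Nat.lt_succ_self _)

lemma elim_no_cycle_at_max (hk : ∀ v, v ≠ r → key (parent v) < key v)
    {m : V} (c : (elimGraph r parent).Walk m m) (hcyc : c.IsCycle)
    (hmax : ∀ x ∈ c.support, key x ≤ key m) : False := by
  cases c with
  | nil => exact SimpleGraph.Walk.IsCycle.not_of_nil hcyc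
  | @cons _ a _ hadj q =>
    have hqsup : ∀ x ∈ q.support, key x ≤ key m := by
      intro x hx
      exact hmax x (by rw [SimpleGraph.Walk.support_cons]; exact List.mem_cons_of_mem _ hx)
    have ham : parent m = a ∧ m ≠ r := by
      rcases (elimGraph_adj.1 hadj).2 with ⟨h1, h2⟩ | ⟨h1, h2⟩
      · exfalso
        have hka : key a ≤ key m := hqsup a (SimpleGraph.Walk.start_mem_support q)
        have := hk a h2
        rw [h1] at this
        omega
      · exact ⟨h1, h2⟩
    have hq_nodup : q.support.Nodup := by
      have := hcyc.support_nodup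
      rwa [SimpleGraph.Walk.support_cons, List.tail_cons] at this
    cases q with
    | nil => exact hadj.ne rfl
    | @cons _ b _ hadj2 q2 =>
      obtain ⟨d, q3, hd, heq⟩ := SimpleGraph.Walk.exists_cons_eq_concat hadj2 q2
      have hdm : parent m = d ∧ m ≠ r := by
        rcases (elimGraph_adj.1 hd).2 with ⟨h1, h2⟩ | ⟨h1, h2⟩
        · exact ⟨h1, h2⟩
        · exfalso
          have hdin : d ∈ (SimpleGraph.Walk.cons hadj2 q2).support := by
            rw [heq, SimpleGraph.Walk.support_concat, List.mem_append]
            exact Or.inl (SimpleGraph.Walk.end_mem_support q3)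
          have hkd : key d ≤ key m := hqsup d hdin
          have := hk d h2
          rw [h1] at this
          omega
      have hda : d = a := by rw [← hdm.1, ham.1]
      subst hda
      rw [heq] at hq_nodup
      rw [SimpleGraph.Walk.support_concat] at hq_nodup
      obtain ⟨hq3nd, -, -⟩ := List.nodup_append.1 hq_nodup
      have hq3path : q3.IsPath := (SimpleGraph.Walk.isPath_def q3).2 hq3nd
      rw [SimpleGraph.Walk.isPath_iff_eq_nil] at hq3path
      subst hq3path
      have hlen := hcyc.three_le_length
      rw [heq] at hlen
      simp [SimpleGraph.Walk.length_concat] at hlen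

lemma elim_acyclic (hk : ∀ v, v ≠ r → key (parent v) < key v) :
    (elimGraph r parent).IsAcyclic := by
  intro v c hcyc
  have hne : c.support.toFinset.Nonempty :=
    ⟨v, List.mem_toFinset.2 (SimpleGraph.Walk.start_mem_support c)⟩
  obtain ⟨m, hmmem, hmax⟩ := Finset.exists_max_image c.support.toFinset key hne
  rw [List.mem_toFinset] at hmmem
  refine elim_no_cycle_at_max key r parent hk (c.rotate m hmmem) (hcyc.rotate hmmem) ?_
  intro x hx
  have hxc : x ∈ c.support := by
    rcases (SimpleGraph.Walk.mem_support_iff _).1 hx with rfl | hx'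
    · exact hmmem
    · have hperm := SimpleGraph.Walk.support_rotate c m hmmem
      have hxt : x ∈ c.support.tail := (hperm.perm.mem_iff).1 hx'
      exact (SimpleGraph.Walk.mem_support_iff _).2 (Or.inr hxt)
  exact hmax x (List.mem_toFinset.2 hxc)

lemma elim_reach (hk : ∀ v, v ≠ r → key (parent v) < key v) (v : V) :
    (elimGraph r parent).Reachable v r := by
  have main : ∀ n v, key v < n → (elimGraph r parent).Reachable v r := by
    intro n
    induction n with
    | zero => intro v hv; omega
    | succ n ih =>
      intro v hv
      by_cases hr : v = r
      · subst hr; exact SimpleGraph.Reachable.refl _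
      · have h1 := hk v hr
        exact ((elim_adj_parent key r parent hk hr).symm.reachable).trans
          (ih (parent v) (by omega))
  exact main (key v + 1) v (Nat.lt_succ_self _)

lemma elim_connected (hk : ∀ v, v ≠ r → key (parent v) < key v) :
    (elimGraph r parent).Connected := by
  haveI : Nonempty V := ⟨r⟩
  exact ⟨fun a b => (elim_reach key r parent hk a).trans
    (elim_reach key r parent hk b).symm⟩

lemma elim_anc (hinj : Function.Injective key) (hr : ∀ v, key r ≤ key v)
    (hk : ∀ v, v ≠ r → key (parent v) < key v)
    (PUv : V → Finset V)
    (h2 : ∀ v, v ≠ r → parent v ∈ PUv v)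
    (h3 : ∀ v, v ∈ PUv v)
    (h4 : ∀ v, v ≠ r → PUv (parent v) ⊆ PUv v)
    (h7 : ∀ v, v ≠ r → ∀ u, u ∈ PUv v → key u < key v → key u ≤ key (parent v))
    (h8 : ∀ v, v ≠ r → ∀ u, u ∈ PUv v → key u ≤ key (parent v) → u ∈ PUv (parent v)) :
    ∀ u v, u ∈ PUv v → key u ≤ key v → u ∈ (wvAux key r parent hk v).support := by
  have main : ∀ n v, key v < n → ∀ u, u ∈ PUv v → key u ≤ key v →
      u ∈ (wvAux key r parent hk v).support := by
    intro n
    induction n with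
    | zero => intro v hv; omega
    | succ n ih =>
      intro v hv u hu hle
      by_cases huv : u = v
      · subst huv; exact SimpleGraph.Walk.end_mem_support _
      · have hlt : key u < key v := lt_of_le_of_ne hle (fun he => huv (hinj he))
        have hvr : v ≠ r := by
          rintro rfl
          have := hr u
          omega
        have hkp := hk v hvr
        have hup : key u ≤ key (parent v) := h7 v hvr u hu hlt
        have hupu : u ∈ PUv (parent v) := h8 v hvr u hu hup
        rw [wvAux_ne key r parent hk hvr, SimpleGraph.Walk.support_concat,
          List.mem_append]
        exact Or.inl (ih (parent v) (by omega) u hupu hup)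
  intro u v hu hle
  exact main (key v + 1) v (Nat.lt_succ_self _) u hu hle

theorem elimTree (h : ℕ) (hinj : Function.Injective key) (hr : ∀ v, key r ≤ key v)
    (hk : ∀ v, v ≠ r → key (parent v) < key v)
    (PUv : V → Finset V)
    (h2 : ∀ v, v ≠ r → parent v ∈ PUv v)
    (h3 : ∀ v, v ∈ PUv v)
    (h4 : ∀ v, v ≠ r → PUv (parent v) ⊆ PUv v)
    (h5 : ∀ v, (PUv v).card ≤ h)
    (h7 : ∀ v, v ≠ r → ∀ u, u ∈ PUv v → key u < key v → key u ≤ key (parent v))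
    (h8 : ∀ v, v ≠ r → ∀ u, u ∈ PUv v → key u ≤ key (parent v) → u ∈ PUv (parent v)) :
    ∃ T : SimpleGraph V, T.Connected ∧ T.IsAcyclic ∧
      (∀ u v, u ∈ PUv v → key u ≤ key v →
        ∀ p : T.Walk r v, p.IsPath → u ∈ p.support) ∧
      (∀ (v : V) (p : T.Walk r v), p.IsPath → p.support.length ≤ h) := by
  refine ⟨elimGraph r parent, elim_connected key r parent hk,
    elim_acyclic key r parent hk, ?_, ?_⟩
  · intro u v hu hle p hp
    rw [elim_path_unique key r parent hk p hp]
    exact elim_anc key r parent hinj hr hk PUv h2 h3 h4 h7 h8 u v hu hle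
  · intro v p hp
    rw [elim_path_unique key r parent hk p hp]
    obtain ⟨hpath, -, hsub, -⟩ := wvAux_props key r parent hk PUv h2 h3 h4 v
    have hnd := hpath.support_nodup
    calc (wvAux key r parent hk v).support.length
        = (wvAux key r parent hk v).support.toFinset.card :=
          (List.toFinset_card_of_nodup hnd).symm
      _ ≤ (PUv v).card := Finset.card_le_card
          (fun x hx => hsub x (List.mem_toFinset.1 hx))
      _ ≤ h := h5 v

end Elim

section Inst
variable {V : Type} [Fintype V] [DecidableEq V] {G : SimpleGraph V} (D : RootedTreeDecomp G)

lemma mem_pathUnion {x y : D.ι} {p : D.T.Walk x y} {v : V} :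
    v ∈ pathUnion D p ↔ ∃ z ∈ p.support, v ∈ D.bag z := by
  have : ∀ l : List D.ι, (v ∈ l.foldr (fun z acc => D.bag z ∪ acc) ∅ ↔ ∃ z ∈ l, v ∈ D.bag z) := by
    intro l
    induction l with
    | nil => simp
    | cons a l ih => simp [ih]
  exact this _

lemma pathUnion_mono {x y x' y' : D.ι} {p : D.T.Walk x y} {q : D.T.Walk x' y'}
    (h : p.support ⊆ q.support) : pathUnion D p ⊆ pathUnion D q := by
  intro v hv
  rw [mem_pathUnion] at hv ⊢
  obtain ⟨z, hz, hvz⟩ := hv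
  exact ⟨z, h hz, hvz⟩

noncomputable instance : Fintype D.ι := D.fintypeι
noncomputable instance : DecidableEq D.ι := Classical.decEq _

/-- depth of a node in the decomposition tree -/
noncomputable def Ddepth (x : D.ι) : ℕ := (tw D.connected D.root x).length

/-- union of bags from the root to a node -/
noncomputable def DPU (x : D.ι) : Finset V := pathUnion D (tw D.connected D.root x)

lemma bag_cover_finset (v : V) :
    (Finset.univ.filter (fun x => v ∈ D.bag x)).Nonempty := by
  obtain ⟨x, hx⟩ := D.bag_cover v
  exact ⟨x, by simp [hx]⟩

/-- the topmost node of the decomposition tree whose bag contains v -/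
noncomputable def Dtop (v : V) : D.ι :=
  (Finset.exists_min_image _ (Ddepth D) (bag_cover_finset D v)).choose

lemma Dtop_spec (v : V) : v ∈ D.bag (Dtop D v) ∧
    ∀ x : D.ι, v ∈ D.bag x → Ddepth D (Dtop D v) ≤ Ddepth D x := by
  unfold Dtop
  obtain ⟨h1, h2⟩ := (Finset.exists_min_image _ (Ddepth D) (bag_cover_finset D v)).choose_spec
  refine ⟨by simpa using h1, fun x hx => h2 x (by simp [hx])⟩

lemma Dtop_mem (v : V) : v ∈ D.bag (Dtop D v) := (Dtop_spec D v).1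

lemma Dtop_min (v : V) {x : D.ι} (hx : v ∈ D.bag x) :
    Ddepth D (Dtop D v) ≤ Ddepth D x := (Dtop_spec D v).2 x hx

lemma anc_trans {x y z : D.ι} (h1 : x ∈ (tw D.connected D.root y).support)
    (h2 : y ∈ (tw D.connected D.root z).support) :
    x ∈ (tw D.connected D.root z).support :=
  tw_support_mono D.connected D.acyclic h2 h1

lemma anc_depth_le {x y : D.ι} (h : x ∈ (tw D.connected D.root y).support) :
    Ddepth D x ≤ Ddepth D y :=
  tw_length_le D.connected D.acyclic h

lemma anc_eq {x y : D.ι} (h : x ∈ (tw D.connected D.root y).support)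
    (hd : Ddepth D y ≤ Ddepth D x) : x = y :=
  tw_length_eq D.connected D.acyclic h hd

lemma Dcmp {c x y : D.ι} (hx : x ∈ (tw D.connected D.root c).support)
    (hy : y ∈ (tw D.connected D.root c).support)
    (hd : Ddepth D x ≤ Ddepth D y) : x ∈ (tw D.connected D.root y).support := by
  rcases tw_comparable D.connected D.acyclic hx hy with h | h
  · exact h
  · have hyx : y = x := anc_eq D h hd
    rw [hyx]
    exact SimpleGraph.Walk.end_mem_support _

/-- topmost bag containing `v` is an ancestor of any bag containing `v` -/
lemma Dtop_anc {v : V} {y : D.ι} (hy : v ∈ D.bag y) :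
    Dtop D v ∈ (tw D.connected D.root y).support := by
  set hc := D.connected with hhc
  set ha := D.acyclic
  set t := Dtop D v with ht
  have hS : ∀ z, Decidable (z ∈ (tw hc D.root y).support) := fun z => inferInstance
  rcases walk_last_in_set (fun z => z ∈ (tw hc D.root y).support) (tw hc D.root t)
    with hnone | ⟨m, hmS, w₂, hsub, hpath, hfree⟩
  · exact absurd (SimpleGraph.Walk.start_mem_support _)
      (hnone D.root (SimpleGraph.Walk.start_mem_support _))
  · have hmt : m ∈ (tw hc D.root t).support := hsub (SimpleGraph.Walk.start_mem_support w₂)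
    have hw₂p : w₂.IsPath := hpath (tw_isPath hc D.root t)
    -- build a path from t to y through m
    have hjunction : ∀ w, w ∈ w₂.reverse.support →
        w ∈ ((tw hc D.root y).dropUntil m hmS).support → w = m := by
      intro w hw1 hw2
      rw [SimpleGraph.Walk.support_reverse, List.mem_reverse] at hw1
      have hw2' : w ∈ (tw hc D.root y).support :=
        SimpleGraph.Walk.support_dropUntil_subset _ hmS hw2
      by_contra hne
      exact hfree w hw1 hne hw2'
    have hPpath : (w₂.reverse.append ((tw hc D.root y).dropUntil m hmS)).IsPath :=
      isPath_append hw₂p.reverse ((tw_isPath hc D.root y).dropUntil hmS) hjunction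
    have hPeq : w₂.reverse.append ((tw hc D.root y).dropUntil m hmS) = tw hc t y :=
      walk_eq_tw hc ha _ hPpath
    have hmP : m ∈ (tw hc t y).support := by
      rw [← hPeq, SimpleGraph.Walk.mem_support_append_iff]
      exact Or.inl (SimpleGraph.Walk.end_mem_support _)
    have hvm : v ∈ D.bag m := by
      have := D.bag_path t y m (tw hc t y) (tw_isPath hc t y) hmP
      exact this (Finset.mem_inter.2 ⟨Dtop_mem D v, hy⟩)
    have hmd : Ddepth D t ≤ Ddepth D m := Dtop_min D v hvm
    have : m = t := anc_eq D hmt hmd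
    subst this
    exact hmS

lemma mem_DPU {u : V} {x : D.ι} :
    u ∈ DPU D x ↔ ∃ z ∈ (tw D.connected D.root x).support, u ∈ D.bag z :=
  mem_pathUnion D

lemma DPU_mono {x y : D.ι} (h : x ∈ (tw D.connected D.root y).support) :
    DPU D x ⊆ DPU D y :=
  pathUnion_mono D (tw_support_mono D.connected D.acyclic h)

lemma Dtop_of_mem_DPU {u : V} {x : D.ι} (h : u ∈ DPU D x) :
    Dtop D u ∈ (tw D.connected D.root x).support := by
  obtain ⟨z, hz, huz⟩ := (mem_DPU D).1 h
  exact anc_trans D (Dtop_anc D huz) hz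

lemma mem_DPU_of_bag {u : V} {z x : D.ι} (hz : z ∈ (tw D.connected D.root x).support)
    (hu : u ∈ D.bag z) : u ∈ DPU D x :=
  (mem_DPU D).2 ⟨z, hz, hu⟩

lemma self_mem_DPU (v : V) : v ∈ DPU D (Dtop D v) :=
  mem_DPU_of_bag D (SimpleGraph.Walk.end_mem_support _) (Dtop_mem D v)

/-- the ordering key -/
noncomputable def Dkey (v : V) : ℕ :=
  Ddepth D (Dtop D v) * Fintype.card V + (Fintype.equivFin V v : ℕ)

lemma Dkey_inj : Function.Injective (Dkey D) := by
  intro u v huv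
  unfold Dkey at huv
  have hu : ((Fintype.equivFin V) u : ℕ) < Fintype.card V := (Fintype.equivFin V u).2
  have hv : ((Fintype.equivFin V) v : ℕ) < Fintype.card V := (Fintype.equivFin V v).2
  have hd : Ddepth D (Dtop D u) = Ddepth D (Dtop D v) := by
    rcases lt_trichotomy (Ddepth D (Dtop D u)) (Ddepth D (Dtop D v)) with h | h | h
    · exfalso
      have h1 : Ddepth D (Dtop D u) * Fintype.card V + Fintype.card V
          ≤ Ddepth D (Dtop D v) * Fintype.card V := by
        have := Nat.succ_le_of_lt h
        nlinarith
      omega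
    · exact h
    · exfalso
      have h1 : Ddepth D (Dtop D v) * Fintype.card V + Fintype.card V
          ≤ Ddepth D (Dtop D u) * Fintype.card V := by
        have := Nat.succ_le_of_lt h
        nlinarith
      omega
  rw [hd] at huv
  have : (Fintype.equivFin V) u = (Fintype.equivFin V) v := Fin.ext (by omega)
  exact (Fintype.equivFin V).injective this

lemma Dkey_lt {u v : V} (h : Ddepth D (Dtop D u) < Ddepth D (Dtop D v)) :
    Dkey D u < Dkey D v := by
  unfold Dkey
  have hu : ((Fintype.equivFin V) u : ℕ) < Fintype.card V := (Fintype.equivFin V u).2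
  have := Nat.succ_le_of_lt h
  nlinarith [Nat.zero_le ((Fintype.equivFin V) v : ℕ)]

lemma Dkey_le_depth {u v : V} (h : Dkey D u ≤ Dkey D v) :
    Ddepth D (Dtop D u) ≤ Ddepth D (Dtop D v) := by
  by_contra hcon
  push_neg at hcon
  exact absurd h (not_le.2 (Dkey_lt D hcon))

variable [Nonempty V]

/-- the root of the elimination tree: vertex of minimal key -/
noncomputable def Droot : V :=
  (Finset.exists_min_image Finset.univ (Dkey D) ⟨Classical.arbitrary V,
    Finset.mem_univ _⟩).choose

lemma Droot_min (v : V) : Dkey D (Droot D) ≤ Dkey D v :=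
  (Finset.exists_min_image Finset.univ (Dkey D) ⟨Classical.arbitrary V,
    Finset.mem_univ _⟩).choose_spec.2 v (Finset.mem_univ _)

/-- candidates for parenthood -/
noncomputable def Dcand (v : V) : Finset V :=
  (DPU D (Dtop D v)).filter (fun u => Dkey D u < Dkey D v)

lemma cross_lemma {α : Type} {H : SimpleGraph α} {a b : α} (w : H.Walk a b)
    (C : α → Prop) (hCa : C a) (hCb : ¬ C b) :
    ∃ u u', H.Adj u u' ∧ C u ∧ ¬ C u' := by
  induction w with
  | nil => exact absurd hCa hCb
  | @cons x y z hadj w' ih =>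
    by_cases hCy : C y
    · exact ih hCy hCb
    · exact ⟨x, y, hadj, hCa, hCy⟩

lemma Dcand_nonempty (hG : G.Connected) {v : V} (hv : v ≠ Droot D) :
    (Dcand D v).Nonempty := by
  set r := Droot D with hrdef
  have hkrv : Dkey D r < Dkey D v :=
    lt_of_le_of_ne (Droot_min D v) (fun he => hv (Dkey_inj D he).symm)
  by_cases hC : Dtop D v ∈ (tw D.connected D.root (Dtop D r)).support
  · -- r's top is below v's top, forcing equality of tops
    have hd1 : Ddepth D (Dtop D v) ≤ Ddepth D (Dtop D r) := anc_depth_le D hC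
    have hd2 : Ddepth D (Dtop D r) ≤ Ddepth D (Dtop D v) := Dkey_le_depth D (le_of_lt hkrv)
    have heq : Dtop D v = Dtop D r := anc_eq D hC hd2
    refine ⟨r, Finset.mem_filter.2 ⟨?_, hkrv⟩⟩
    rw [heq]
    exact self_mem_DPU D r
  · -- walk from v to r in G, crossing out of C
    obtain ⟨w⟩ := hG.preconnected v r
    obtain ⟨a, b, hadj, hCa, hCb⟩ := cross_lemma w
      (fun u => Dtop D v ∈ (tw D.connected D.root (Dtop D u)).support)
      (SimpleGraph.Walk.end_mem_support _) hC
    obtain ⟨y, hay, hby⟩ := D.bag_edge a b hadj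
    have htay : Dtop D a ∈ (tw D.connected D.root y).support := Dtop_anc D hay
    have htby : Dtop D b ∈ (tw D.connected D.root y).support := Dtop_anc D hby
    have htvy : Dtop D v ∈ (tw D.connected D.root y).support :=
      anc_trans D hCa htay
    have hcomp := tw_comparable D.connected D.acyclic htby htvy
    have htbv : Dtop D b ∈ (tw D.connected D.root (Dtop D v)).support := by
      rcases hcomp with h | h
      · exact h
      · exact absurd h hCb
    have hne : Dtop D b ≠ Dtop D v := by
      intro he
      apply hCb
      rw [he]
      exact SimpleGraph.Walk.end_mem_support _
    have hdlt : Ddepth D (Dtop D b) < Ddepth D (Dtop D v) := by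
      rcases lt_or_eq_of_le (anc_depth_le D htbv) with h | h
      · exact h
      · exact absurd (anc_eq D htbv (le_of_eq h.symm)) hne
    refine ⟨b, Finset.mem_filter.2 ⟨?_, Dkey_lt D hdlt⟩⟩
    exact mem_DPU_of_bag D htbv (Dtop_mem D b)

/-- parent in the elimination order -/
noncomputable def Dparent (v : V) : V :=
  if hv : (Dcand D v).Nonempty then
    (Finset.exists_max_image _ (Dkey D) hv).choose
  else v

lemma Dparent_spec {v : V} (hv : (Dcand D v).Nonempty) :
    Dparent D v ∈ Dcand D v ∧
      ∀ u ∈ Dcand D v, Dkey D u ≤ Dkey D (Dparent D v) := by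
  rw [Dparent, dif_pos hv]
  exact ⟨(Finset.exists_max_image _ (Dkey D) hv).choose_spec.1,
    (Finset.exists_max_image _ (Dkey D) hv).choose_spec.2⟩

end Inst


section Directions
variable {V : Type} [Fintype V] [DecidableEq V] {G : SimpleGraph V}

lemma hard_dir (hG : G.Connected) {h : ℕ} (D : RootedTreeDecomp G)
    (hb : PathUnionBound D h) : TreeDepthBound G h := by
  haveI : Nonempty V := hG.nonempty
  have hpspec : ∀ v : V, v ≠ Droot D →
      (Dparent D v ∈ DPU D (Dtop D v) ∧ Dkey D (Dparent D v) < Dkey D v ∧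
        ∀ u ∈ DPU D (Dtop D v), Dkey D u < Dkey D v → Dkey D u ≤ Dkey D (Dparent D v)) := by
    intro v hv
    obtain ⟨hmem, hmax⟩ := Dparent_spec D (Dcand_nonempty D hG hv)
    obtain ⟨h1, h2⟩ := Finset.mem_filter.1 hmem
    exact ⟨h1, h2, fun u hu hlt => hmax u (Finset.mem_filter.2 ⟨hu, hlt⟩)⟩
  have hk : ∀ v, v ≠ Droot D → Dkey D (Dparent D v) < Dkey D v :=
    fun v hv => (hpspec v hv).2.1
  have h2 : ∀ v, v ≠ Droot D → Dparent D v ∈ DPU D (Dtop D v) :=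
    fun v hv => (hpspec v hv).1
  have h3 : ∀ v : V, v ∈ DPU D (Dtop D v) := fun v => self_mem_DPU D v
  have hcmp : ∀ (u v : V), u ∈ DPU D (Dtop D v) →
      Dtop D u ∈ (tw D.connected D.root (Dtop D v)).support :=
    fun u v hu => Dtop_of_mem_DPU D hu
  have h4 : ∀ v, v ≠ Droot D → DPU D (Dtop D (Dparent D v)) ⊆ DPU D (Dtop D v) :=
    fun v hv => DPU_mono D (hcmp _ v (h2 v hv))
  have h5 : ∀ v : V, (DPU D (Dtop D v)).card ≤ h :=
    fun v => hb (Dtop D v) (tw D.connected D.root (Dtop D v)) (tw_isPath _ _ _)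
  have h7 : ∀ v, v ≠ Droot D → ∀ u, u ∈ DPU D (Dtop D v) →
      Dkey D u < Dkey D v → Dkey D u ≤ Dkey D (Dparent D v) :=
    fun v hv => (hpspec v hv).2.2
  have h8 : ∀ v, v ≠ Droot D → ∀ u, u ∈ DPU D (Dtop D v) →
      Dkey D u ≤ Dkey D (Dparent D v) → u ∈ DPU D (Dtop D (Dparent D v)) := by
    intro v hv u hu hle
    have htu := hcmp u v hu
    have htp := hcmp (Dparent D v) v (h2 v hv)
    have hdep : Ddepth D (Dtop D u) ≤ Ddepth D (Dtop D (Dparent D v)) :=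
      Dkey_le_depth D hle
    exact mem_DPU_of_bag D (Dcmp D htu htp hdep) (Dtop_mem D u)
  obtain ⟨T, hconn, hacyc, hanc, hheight⟩ :=
    elimTree (Dkey D) (Droot D) (Dparent D) h (Dkey_inj D) (Droot_min D) hk
      (fun v => DPU D (Dtop D v)) h2 h3 h4 h5 h7 h8
  refine ⟨T, Droot D, hconn, hacyc, ?_, hheight⟩
  intro u v hadj
  have hne : Dkey D u ≠ Dkey D v := fun he => (G.ne_of_adj hadj) (Dkey_inj D he)
  obtain ⟨y, huy, hvy⟩ := D.bag_edge u v hadj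
  have htu := Dtop_anc D huy
  have htv := Dtop_anc D hvy
  rcases lt_or_gt_of_ne hne with hlt | hlt
  · left
    intro p hp
    refine hanc u v ?_ (le_of_lt hlt) p hp
    have hdep : Ddepth D (Dtop D u) ≤ Ddepth D (Dtop D v) :=
      Dkey_le_depth D (le_of_lt hlt)
    exact mem_DPU_of_bag D (Dcmp D htu htv hdep) (Dtop_mem D u)
  · right
    intro p hp
    refine hanc v u ?_ (le_of_lt hlt) p hp
    have hdep : Ddepth D (Dtop D v) ≤ Ddepth D (Dtop D u) :=
      Dkey_le_depth D (le_of_lt hlt)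
    exact mem_DPU_of_bag D (Dcmp D htv htu hdep) (Dtop_mem D v)

lemma easy_dir {h : ℕ} (hT : TreeDepthBound G h) :
    ∃ D : RootedTreeDecomp G, PathUnionBound D h := by
  obtain ⟨T, r, hc, ha, hcl, hht⟩ := hT
  have bp : ∀ (x y z : V) (p : T.Walk x y), p.IsPath → z ∈ p.support →
      (tw hc r x).support.toFinset ∩ (tw hc r y).support.toFinset
        ⊆ (tw hc r z).support.toFinset := by
    intro x y z p hp hz w hw
    rw [Finset.mem_inter, List.mem_toFinset, List.mem_toFinset] at hw
    obtain ⟨hwx, hwy⟩ := hw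
    rw [List.mem_toFinset]
    have hW1 : w ∈ ((tw hc r z).append ((p.takeUntil z hz).reverse)).support := by
      apply tw_support_subset_walk hc ha _ hwx
    have hW2 : w ∈ ((tw hc r z).append (p.dropUntil z hz)).support := by
      apply tw_support_subset_walk hc ha _ hwy
    rw [SimpleGraph.Walk.mem_support_append_iff] at hW1 hW2
    rcases hW1 with hW1 | hW1
    · exact hW1
    rcases hW2 with hW2 | hW2
    · exact hW2
    rw [SimpleGraph.Walk.support_reverse, List.mem_reverse] at hW1
    have : w = z := path_take_drop_inter hp hz hW1 hW2
    rw [this]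
    exact SimpleGraph.Walk.end_mem_support _
  have be : ∀ u v : V, G.Adj u v → ∃ x : V,
      u ∈ (tw hc r x).support.toFinset ∧ v ∈ (tw hc r x).support.toFinset := by
    intro u v hadj
    rcases hcl u v hadj with hl | hl
    · exact ⟨v, List.mem_toFinset.2 (hl (tw hc r v) (tw_isPath hc r v)),
        List.mem_toFinset.2 (SimpleGraph.Walk.end_mem_support _)⟩
    · exact ⟨u, List.mem_toFinset.2 (SimpleGraph.Walk.end_mem_support _),
        List.mem_toFinset.2 (hl (tw hc r u) (tw_isPath hc r u))⟩
  have bc : ∀ v : V, ∃ x : V, v ∈ (tw hc r x).support.toFinset := by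
    intro v
    exact ⟨v, List.mem_toFinset.2 (SimpleGraph.Walk.end_mem_support _)⟩
  refine ⟨⟨V, inferInstance, T, hc, ha, r,
    fun x => (tw hc r x).support.toFinset, bp, be, bc⟩, ?_⟩
  intro x p hp
  have hpe : p = tw hc r x := walk_eq_tw hc ha p hp
  rw [hpe]
  refine le_trans (Finset.card_le_card ?_)
    (le_trans (List.toFinset_card_le _) (hht x (tw hc r x) (tw_isPath hc r x)))
  intro w hw
  obtain ⟨z, hz, hwz⟩ := (mem_pathUnion _).1 hw
  have hwz' : w ∈ (tw hc r z).support.toFinset := hwz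
  rw [List.mem_toFinset] at hwz' ⊢
  exact tw_support_mono hc ha hz hwz'

end Directions

theorem hm_eq_treedepth {V : Type} [Fintype V] [DecidableEq V]
    (G : SimpleGraph V) (hG : G.Connected) :
    sInf {h : ℕ | ∃ D : RootedTreeDecomp G, PathUnionBound D h}
      = sInf {h : ℕ | TreeDepthBound G h} := by
  have hset : {h : ℕ | ∃ D : RootedTreeDecomp G, PathUnionBound D h}
      = {h : ℕ | TreeDepthBound G h} := by
    ext h
    constructor
    · rintro ⟨D, hD⟩
      exact hard_dir hG D hD
    · intro ht
      exact easy_dir ht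
  rw [hset]
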